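/- Let e, d, m0 be integers with e ≥ 1, d ≥ 4e, and m0 ≥ 0. If e(d − m0 − 8) + m0 + 4 = 0 and (d−4e)(d−4e+3)/2 − (m0−4e+4)(m0−4e+5)/2 ≥ 0, then d = 4e and m0 = 4e − 4. -/
import Mathlib


/-- Case analysis: `A = L(e, e-1, 2e, 1)` splits off 4 times from `L(d, m0, 2e, 4)`.
If `M·A = 0` and `v(M) ≥ 0` then `d = 4e` and `m0 = 4e - 4`. -/
theorem split_four_times (e d m0 : ℤ) (he : 1 ≤ e) (hd : 4 * e ≤ d) (hm : 0 ≤ m0)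
    (hMA : e * (d - m0 - 8) + m0 + 4 = 0)
    (hvM : 0 ≤ (d - 4 * e) * (d - 4 * e + 3) / 2 - (m0 - 4 * e + 4) * (m0 - 4 * e + 5) / 2) :
    d = 4 * e ∧ m0 = 4 * e - 4 := by
  set x := d - 4 * e with hx
  set y := m0 - 4 * e + 4 with hy
  have hx0 : 0 ≤ x := by omega
  have hlin : (e - 1) * y = e * x := by
    rw [hx, hy]; linear_combination (-1 : ℤ) * hMA
  have h5 : m0 - 4 * e + 5 = y + 1 := by rw [hy]; ring
  rw [h5] at hvM
  obtain ⟨k, hk⟩ : ∃ k : ℤ, x * (x + 3) = k + k := by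
    obtain ⟨k, hk⟩ := Int.even_mul_succ_self x
    exact ⟨k + x, by linarith [hk]⟩
  obtain ⟨l, hl⟩ : ∃ l : ℤ, y * (y + 1) = l + l := Int.even_mul_succ_self y
  rw [hk, hl] at hvM
  have h3 : y * (y + 1) ≤ x * (x + 3) := by omega
  rcases eq_or_lt_of_le he with he1 | he2
  · have hex : x = 0 := by nlinarith [hlin]
    have hy0 : 0 ≤ y := by omega
    have hyy : y = 0 := by nlinarith
    constructor <;> omega
  · have hxeq : x = 0 := by
      by_contra hne
      have hx1 : 1 ≤ x := by omega
      have hyx : x + 1 ≤ y := by nlinarith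
      nlinarith
    have hy0 : y = 0 := by
      have h0 : (e - 1) * y = 0 := by rw [hlin, hxeq]; ring
      have := mul_eq_zero.mp h0
      omega
    constructor <;> omega
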